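/- Let k, ℓ > 0, let π1 ∈ T_k and π2 ∈ T_ℓ, and let 1 ≤ i ≤ slmax(π2). Then D(C2(π1, π2, i)) = (π1, π2). -/

import Mathlib

namespace TSP

theorem foldr_max_mem {α : Type} [LinearOrder α] (x : α) (l : List α) :
    l.foldr max x ∈ x :: l := by
  induction l with
  | nil => simp
  | cons a t ih =>
    simp only [List.foldr_cons]
    rcases max_choice a (t.foldr max x) with h | h <;> rw [h]
    · simp
    · rcases List.mem_cons.mp ih with h' | h'
      · rw [h']; simp
      · exact List.mem_cons.mpr (Or.inr (List.mem_cons.mpr (Or.inr h')))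

theorem length_takeWhile_lt {α : Type} [DecidableEq α] {m : α} {l : List α}
    (h : m ∈ l) : (l.takeWhile (· ≠ m)).length < l.length := by
  have hd : l.dropWhile (· ≠ m) ≠ [] := by
    intro hnil
    have := List.dropWhile_eq_nil_iff.mp hnil m h
    simp at this
  have hsum : (l.takeWhile (· ≠ m)).length + (l.dropWhile (· ≠ m)).length = l.length := by
    rw [← List.length_append, List.takeWhile_append_dropWhile]
  have : 0 < (l.dropWhile (· ≠ m)).length := List.length_pos_iff.mpr hd
  omega

theorem length_tail_dropWhile_lt {α : Type} [DecidableEq α] {m : α} {l : List α}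
    (h : l ≠ []) : ((l.dropWhile (· ≠ m)).tail).length < l.length := by
  have hsum : (l.takeWhile (· ≠ m)).length + (l.dropWhile (· ≠ m)).length = l.length := by
    rw [← List.length_append, List.takeWhile_append_dropWhile]
  have h2 : ((l.dropWhile (· ≠ m)).tail).length = (l.dropWhile (· ≠ m)).length - 1 :=
    List.length_tail
  have : 0 < l.length := List.length_pos_iff.mpr h
  omega

/-- The stack-sorting operator `S`: `S(ε) = ε`, and if `A` is nonempty with
largest element `m` and `A = A_L · (m) · A_R`, then `S(A) = S(A_L) · S(A_R) · (m)`. -/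
def S {α : Type} [LinearOrder α] : List α → List α
  | [] => []
  | x :: l =>
    let m := l.foldr max x
    S ((x :: l).takeWhile (· ≠ m)) ++ S (((x :: l).dropWhile (· ≠ m)).tail) ++ [m]
termination_by l => l.length
decreasing_by
  · exact length_takeWhile_lt (by simpa [List.foldr_attach] using foldr_max_mem x l)
  · exact length_tail_dropWhile_lt (by simp)

/-- The identity permutation `id_n = (1, 2, …, n)` as a list. -/
def idPerm (n : ℕ) : List ℕ := List.range' 1 n

/-- `l` is a permutation of `{1, …, n}` (viewed as a sequence). -/
def IsPermOf (n : ℕ) (l : List ℕ) : Prop := l.Perm (idPerm n)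

/-- `l` is a two-stack sortable permutation (of `{1, …, len l}`). -/
def Is2SS (l : List ℕ) : Prop := IsPermOf l.length l ∧ S (S l) = idPerm l.length

/-- `σ^{+k}`: add `k` to every entry. -/
def shift (k : ℕ) (l : List ℕ) : List ℕ := l.map (· + k)

/-- `σ^{+(k1,m,k2)}`: add `k1` to every entry strictly smaller than `m`, `k2` to the others. -/
def shift3 (k1 m k2 : ℕ) (l : List ℕ) : List ℕ :=
  l.map (fun a => if a < m then a + k1 else a + k2)

/-- Standardization `P(A)`: the permutation of `{1,…,len A}` in the same relative order. -/
def stand (l : List ℕ) : List ℕ := l.map (fun a => (l.filter (fun b => b ≤ a)).length)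

/-- Avoidance of the pattern 231: no positions `i < j < k` with `l(k) < l(i) < l(j)`. -/
def Avoids231 (l : List ℕ) : Prop :=
  ¬ ∃ i j k, i < j ∧ j < k ∧ k < l.length ∧
      l.getD k 0 < l.getD i 0 ∧ l.getD i 0 < l.getD j 0

/-- The list of values of the left-to-right maxima of `l`, in order. -/
def lrMaxima (l : List ℕ) : List ℕ :=
  ((List.range l.length).filter
    (fun i => (l.take i).all (fun b => b < l.getD i 0))).map (fun i => l.getD i 0)

/-- `lmax`: the number of left-to-right maxima. -/
def lmax (l : List ℕ) : ℕ :=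
  (List.range l.length).countP (fun i => (l.take i).all (fun b => b < l.getD i 0))

/-- `rmax`: the number of right-to-left maxima. -/
def rmax (l : List ℕ) : ℕ :=
  (List.range l.length).countP (fun i => (l.drop (i+1)).all (fun b => b < l.getD i 0))

/-- `asc`: the number of ascents. -/
def asc (l : List ℕ) : ℕ :=
  (List.range (l.length - 1)).countP (fun i => l.getD i 0 < l.getD (i+1) 0)

/-- `des`: the number of descents. -/
def des (l : List ℕ) : ℕ :=
  (List.range (l.length - 1)).countP (fun i => l.getD (i+1) 0 < l.getD i 0)

/-- `slmax(π)`: the number of left-to-right maxima of `S(π)`. -/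
def slmax (l : List ℕ) : ℕ := lmax (S l)

/-- `sldes(π)`: the number of entries `a` that precede `a - 1` in `S(π)`. -/
def sldes (l : List ℕ) : ℕ :=
  (List.range (S l).length).countP
    (fun i => ((S l).drop (i+1)).any (fun b => b + 1 = (S l).getD i 0))

/-- The construction `C1(π1, π2) = π1 · (k+ℓ+1) · π2^{+k}`. -/
def C1 (p1 p2 : List ℕ) : List ℕ :=
  p1 ++ (p1.length + p2.length + 1) :: shift p1.length p2

/-- The `i`-th left-to-right maximum `a_i` of `S(π2)` (1-indexed). -/
def lrm (p2 : List ℕ) (i : ℕ) : ℕ := (lrMaxima (S p2)).getD (i - 1) 0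

/-- The construction `C2(π1, π2, i) = π1^{+(0,k,a_i)} · (k+ℓ+1) · π2^{+(k-1,a_i+1,k)}`. -/
def C2 (p1 p2 : List ℕ) (i : ℕ) : List ℕ :=
  shift3 0 p1.length (lrm p2 i) p1 ++
    (p1.length + p2.length + 1) :: shift3 (p1.length - 1) (lrm p2 i + 1) p1.length p2

/-- The decomposition `D(π) = (P(π_ℓ), P(π_r))`, where `π = π_ℓ · (n) · π_r`
with `n` the largest entry of `π`. -/
def D (l : List ℕ) : List ℕ × List ℕ :=
  match l with
  | [] => ([], [])
  | x :: t =>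
    let m := t.foldr max x
    (stand ((x :: t).takeWhile (· ≠ m)), stand (((x :: t).dropWhile (· ≠ m)).tail))


theorem le_foldr_max {a x : ℕ} {l : List ℕ} (h : a ∈ x :: l) : a ≤ l.foldr max x := by
  induction l with
  | nil => simp at h; simp [h]
  | cons b t ih =>
    simp only [List.foldr_cons]
    rcases List.mem_cons.mp h with h' | h'
    · exact le_max_of_le_right (ih (by simp [h']))
    · rcases List.mem_cons.mp h' with h'' | h''
      · exact h'' ▸ le_max_left _ _
      · exact le_max_of_le_right (ih (by simp [h'']))

theorem foldr_max_eq {m x : ℕ} {l : List ℕ} (hm : m ∈ x :: l)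
    (hub : ∀ a ∈ x :: l, a ≤ m) : l.foldr max x = m :=
  le_antisymm (hub _ (foldr_max_mem x l)) (le_foldr_max hm)

theorem takeWhile_append_cons {A B : List ℕ} {m : ℕ} (hA : ∀ a ∈ A, a ≠ m) :
    (A ++ m :: B).takeWhile (· ≠ m) = A ∧ (A ++ m :: B).dropWhile (· ≠ m) = m :: B := by
  induction A with
  | nil => simp [List.takeWhile_cons, List.dropWhile_cons]
  | cons a t ih =>
    have h1 := hA a (by simp)
    have ih' := ih (fun b hb => hA b (by simp [hb]))
    simp only [ne_eq, decide_not] at ih' ⊢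
    simp [List.takeWhile_cons, List.dropWhile_cons, h1, ih'.1, ih'.2]

theorem dropWhile_ne_eq_cons {m : ℕ} {l : List ℕ} (h : m ∈ l) :
    l.dropWhile (· ≠ m) = m :: (l.dropWhile (· ≠ m)).tail := by
  have hd : l.dropWhile (· ≠ m) ≠ [] := by
    intro hnil
    have := List.dropWhile_eq_nil_iff.mp hnil m h
    simp at this
  have hh : (l.dropWhile (· ≠ m)).head hd = m := by
    have := List.head_dropWhile_not (fun x => decide (x ≠ m)) hd
    simpa using this
  conv_lhs => rw [← List.cons_head_tail hd]
  rw [hh]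

open List in
theorem S_perm (l : List ℕ) : (S l).Perm l := by
  match l with
  | [] => simp [S]
  | x :: t =>
    rw [S]
    have hmem := foldr_max_mem x t
    set m := t.foldr max x with hm
    have h1 := S_perm ((x :: t).takeWhile (· ≠ m))
    have h2 := S_perm (((x :: t).dropWhile (· ≠ m)).tail)
    have hd := dropWhile_ne_eq_cons hmem
    calc S ((x :: t).takeWhile (· ≠ m)) ++ S (((x :: t).dropWhile (· ≠ m)).tail) ++ [m]
        ~ (x :: t).takeWhile (· ≠ m) ++ (((x :: t).dropWhile (· ≠ m)).tail ++ [m]) := by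
          rw [← List.append_assoc]
          exact (h1.append h2).append (List.Perm.refl [m])
      _ ~ (x :: t).takeWhile (· ≠ m) ++ (m :: ((x :: t).dropWhile (· ≠ m)).tail) :=
          List.Perm.append_left _ (List.perm_append_singleton m _)
      _ = (x :: t).takeWhile (· ≠ m) ++ (x :: t).dropWhile (· ≠ m) := by rw [← hd]
      _ = x :: t := List.takeWhile_append_dropWhile
termination_by l.length
decreasing_by
  · exact length_takeWhile_lt hmem
  · exact length_tail_dropWhile_lt (by simp)

theorem countP_le_idPerm {a n : ℕ} (h2 : a ≤ n) :
    (idPerm n).countP (fun b => b ≤ a) = a := by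
  unfold idPerm
  have hsplit : List.range' 1 n = List.range' 1 a ++ List.range' (1 + a) (n - a) := by
    have := List.range'_append (s := 1) (m := a) (n := n-a) (step := 1)
    simp only [one_mul] at this
    rw [this]
    congr 1
    omega
  rw [hsplit, List.countP_append]
  have e1 : (List.range' 1 a).countP (fun b => b ≤ a) = a := by
    have : ∀ b ∈ List.range' 1 a, (fun b => decide (b ≤ a)) b = true := by
      intro b hb
      have := List.mem_range'_1.mp hb
      simp; omega
    rw [List.countP_eq_length.mpr this, List.length_range']
  have e2 : (List.range' (1+a) (n-a)).countP (fun b => b ≤ a) = 0 := by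
    rw [List.countP_eq_zero]
    intro b hb
    have := List.mem_range'_1.mp hb
    simp; omega
  omega

theorem stand_perm {n : ℕ} {l : List ℕ} (h : l.Perm (idPerm n)) : stand l = l := by
  unfold stand
  conv_rhs => rw [← List.map_id l]
  apply List.map_congr_left
  intro a ha
  have ham : a ∈ idPerm n := h.mem_iff.mp ha
  have := List.mem_range'_1.mp ham
  rw [← List.countP_eq_length_filter, h.countP_eq]
  simp only [id]
  exact countP_le_idPerm (by omega)

theorem stand_map {f : ℕ → ℕ} (hf : ∀ a b, f a ≤ f b ↔ a ≤ b) (l : List ℕ) :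
    stand (l.map f) = stand l := by
  unfold stand
  rw [List.map_map]
  apply List.map_congr_left
  intro a _
  simp only [Function.comp]
  rw [← List.countP_eq_length_filter, ← List.countP_eq_length_filter, List.countP_map]
  apply List.countP_congr
  intro b _
  simp [hf]

theorem lrm_le {p2 : List ℕ} {i n : ℕ} (h2 : p2.Perm (idPerm n)) (hi1 : 1 ≤ i)
    (hi2 : i ≤ slmax p2) : lrm p2 i ≤ n := by
  have hlen : (lrMaxima (S p2)).length = lmax (S p2) := by
    unfold lrMaxima lmax
    rw [List.length_map, ← List.countP_eq_length_filter]
  have hidx : i - 1 < (lrMaxima (S p2)).length := by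
    rw [hlen]
    unfold slmax at hi2
    omega
  have hmem : lrm p2 i ∈ lrMaxima (S p2) := by
    unfold lrm
    rw [List.getD_eq_getElem _ _ hidx]
    exact List.getElem_mem hidx
  unfold lrMaxima at hmem
  obtain ⟨j, hj, hje⟩ := List.mem_map.mp hmem
  have hjr : j < (S p2).length := List.mem_range.mp (List.mem_filter.mp hj).1
  have hm1 : lrm p2 i ∈ S p2 := by
    rw [← hje, List.getD_eq_getElem _ _ hjr]
    exact List.getElem_mem hjr
  have hm2 : lrm p2 i ∈ idPerm n := h2.mem_iff.mp ((S_perm p2).mem_iff.mp hm1)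
  have := List.mem_range'_1.mp hm2
  omega

theorem D_append_cons {A B : List ℕ} {m : ℕ} (hne : A ≠ []) (hA : ∀ a ∈ A, a < m)
    (hB : ∀ b ∈ B, b < m) : D (A ++ m :: B) = (stand A, stand B) := by
  obtain ⟨p, t, rfl⟩ := List.exists_cons_of_ne_nil hne
  have hmm : m ∈ p :: (t ++ m :: B) := by simp
  have hub : ∀ a ∈ p :: (t ++ m :: B), a ≤ m := by
    intro a ha
    rcases List.mem_cons.mp ha with h | h
    · exact le_of_lt (hA _ (h ▸ List.mem_cons_self (a := p) (l := t)))
    · rcases List.mem_append.mp h with h' | h'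
      · exact le_of_lt (hA _ (List.mem_cons_of_mem _ h'))
      · rcases List.mem_cons.mp h' with h'' | h''
        · omega
        · exact le_of_lt (hB _ h'')
  have hmax : (t ++ m :: B).foldr max p = m := foldr_max_eq hmm hub
  have htw := takeWhile_append_cons (A := p :: t) (B := B) (m := m)
    (fun a ha => Nat.ne_of_lt (hA a ha))
  show D (p :: (t ++ m :: B)) = _
  simp only [D, hmax]
  rw [show p :: (t ++ m :: B) = (p :: t) ++ m :: B from rfl, htw.1, htw.2, List.tail_cons]

/-- For `k, ℓ > 0`, `π1 ∈ T_k`, `π2 ∈ T_ℓ` and `1 ≤ i ≤ slmax(π2)`,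
`D(C2(π1, π2, i)) = (π1, π2)`. -/
theorem D_C2 (k ℓ : ℕ) (hk : 0 < k) (hℓ : 0 < ℓ) (π1 π2 : List ℕ)
    (h1 : π1.length = k) (h1' : Is2SS π1) (h2 : π2.length = ℓ) (h2' : Is2SS π2)
    (i : ℕ) (hi1 : 1 ≤ i) (hi2 : i ≤ slmax π2) :
    D (C2 π1 π2 i) = (π1, π2) := by
  obtain ⟨hp1, -⟩ := h1'
  obtain ⟨hp2, -⟩ := h2'
  unfold IsPermOf at hp1 hp2
  rw [h1] at hp1
  rw [h2] at hp2
  set c := lrm π2 i with hc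
  have hcle : c ≤ ℓ := lrm_le hp2 hi1 hi2
  have hb1 : ∀ a ∈ π1, 1 ≤ a ∧ a ≤ k := by
    intro a ha
    have := List.mem_range'_1.mp (hp1.mem_iff.mp ha)
    omega
  have hb2 : ∀ a ∈ π2, 1 ≤ a ∧ a ≤ ℓ := by
    intro a ha
    have := List.mem_range'_1.mp (hp2.mem_iff.mp ha)
    omega
  have hm : π1.length + π2.length + 1 = k + ℓ + 1 := by rw [h1, h2]
  have hC2 : C2 π1 π2 i = π1.map (fun a => if a < π1.length then a + 0 else a + c) ++
      (π1.length + π2.length + 1) ::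
      π2.map (fun a => if a < c + 1 then a + (π1.length - 1) else a + π1.length) := rfl
  have hAlt : ∀ y ∈ π1.map (fun a => if a < π1.length then a + 0 else a + c),
      y < π1.length + π2.length + 1 := by
    intro y hy
    obtain ⟨a, ha, rfl⟩ := List.mem_map.mp hy
    have := hb1 a ha
    split <;> omega
  have hBlt : ∀ y ∈ π2.map (fun a => if a < c + 1 then a + (π1.length - 1) else a + π1.length),
      y < π1.length + π2.length + 1 := by
    intro y hy
    obtain ⟨a, ha, rfl⟩ := List.mem_map.mp hy
    have := hb2 a ha
    split <;> omega
  have hne : π1.map (fun a => if a < π1.length then a + 0 else a + c) ≠ [] := by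
    intro hnil
    have := congrArg List.length hnil
    simp [h1] at this
    omega
  rw [hC2, D_append_cons hne hAlt hBlt]
  have hmono1 : ∀ a b : ℕ, (if a < π1.length then a + 0 else a + c) ≤
      (if b < π1.length then b + 0 else b + c) ↔ a ≤ b := by
    intro a b
    split <;> split <;> omega
  have hmono2 : ∀ a b : ℕ, (if a < c + 1 then a + (π1.length - 1) else a + π1.length) ≤
      (if b < c + 1 then b + (π1.length - 1) else b + π1.length) ↔ a ≤ b := by
    intro a b
    split <;> split <;> omega
  rw [stand_map hmono1, stand_map hmono2, stand_perm hp1, stand_perm hp2]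


end TSP
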